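/- Let ρ_AB be a separable bipartite state on ℂ^{d_A} ⊗ ℂ^{d_B}, let a ∈ ℝ^m and b ∈ ℝ^n be arbitrary vectors, let {M^A_α}_{α=1}^{d_A²} be a GSIC-POVM on ℂ^{d_A} with parameter a_A and {M^B_β}_{β=1}^{d_B²} a GSIC-POVM on ℂ^{d_B} with parameter a_B. Then ‖Q_{a,b}(ρ_AB)‖_tr ≤ √((|a|² + (a_A d_A² + 1)/(d_A(d_A+1)))·(|b|² + (a_B d_B² + 1)/(d_B(d_B+1)))). -/

import Mathlib

open scoped BigOperators ComplexOrder
open Matrix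

noncomputable def traceNorm {m n : Type*} [Fintype m] [Fintype n] [DecidableEq n]
    (X : Matrix m n ℂ) : ℝ :=
  (((Matrix.posSemidef_conjTranspose_mul_self X).1.eigenvectorUnitary : Matrix n n ℂ) *
    diagonal (((↑) : ℝ → ℂ) ∘ (√·) ∘ (Matrix.posSemidef_conjTranspose_mul_self X).1.eigenvalues) *
    (star (Matrix.posSemidef_conjTranspose_mul_self X).1.eigenvectorUnitary :
      Matrix n n ℂ)).trace.re

def IsDensityMatrix {ι : Type*} [Fintype ι] (ρ : Matrix ι ι ℂ) : Prop :=
  ρ.PosSemidef ∧ ρ.trace = 1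

def IsNMPOVM (d N M : ℕ) (x : ℝ)
    (E : Fin N → Fin M → Matrix (Fin d) (Fin d) ℂ) : Prop :=
  (∀ α k, (E α k).PosSemidef) ∧
  (∀ α, ∑ k, E α k = 1) ∧
  (∀ α k, (E α k).trace = (((d : ℝ) / M : ℝ) : ℂ)) ∧
  (∀ α k, (E α k * E α k).trace = (x : ℂ)) ∧
  (∀ α k l, k ≠ l → (E α k * E α l).trace =
      ((((d : ℝ) - M * x) / (M * ((M : ℝ) - 1)) : ℝ) : ℂ)) ∧
  (∀ α β k l, α ≠ β → (E α k * E β l).trace = (((d : ℝ) / M ^ 2 : ℝ) : ℂ)) ∧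
  ((d : ℝ) / M ^ 2 < x ∧ x ≤ min ((d : ℝ) ^ 2 / M ^ 2) ((d : ℝ) / M))

def IsInfoComplete (d N M : ℕ) : Prop := ((M : ℝ) - 1) * N = (d : ℝ) ^ 2 - 1
open Kronecker

/-- Partial trace over the second factor. -/
noncomputable def ptraceB {dA dB : ℕ} (ρ : Matrix (Fin dA × Fin dB) (Fin dA × Fin dB) ℂ) :
    Matrix (Fin dA) (Fin dA) ℂ :=
  Matrix.of fun i j => ∑ k, ρ (i, k) (j, k)

/-- Partial trace over the first factor. -/
noncomputable def ptraceA {dA dB : ℕ} (ρ : Matrix (Fin dA × Fin dB) (Fin dA × Fin dB) ℂ) :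
    Matrix (Fin dB) (Fin dB) ℂ :=
  Matrix.of fun i j => ∑ k, ρ (k, i) (k, j)

/-- A bipartite state is separable if it is a finite convex combination of
tensor products of local density matrices. -/
def SeparableState {dA dB : ℕ} (ρ : Matrix (Fin dA × Fin dB) (Fin dA × Fin dB) ℂ) : Prop :=
  ∃ (K : ℕ) (p : Fin K → ℝ) (ρA : Fin K → Matrix (Fin dA) (Fin dA) ℂ)
    (ρB : Fin K → Matrix (Fin dB) (Fin dB) ℂ),
    (∀ i, 0 ≤ p i) ∧ (∑ i, p i = 1) ∧
    (∀ i, IsDensityMatrix (ρA i)) ∧ (∀ i, IsDensityMatrix (ρB i)) ∧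
    ρ = ∑ i, (p i : ℂ) • (ρA i ⊗ₖ ρB i)
/-- A general symmetric informationally complete POVM (GSIC-POVM) on ℂ^d with
parameter a. -/
def IsGSICPOVM (d : ℕ) (a : ℝ) (Ms : Fin (d ^ 2) → Matrix (Fin d) (Fin d) ℂ) : Prop :=
  (∀ α, (Ms α).PosSemidef) ∧ (∑ α, Ms α = 1) ∧
  (∀ α, (Ms α * Ms α).trace = (a : ℂ)) ∧
  (∀ α β, α ≠ β → (Ms α * Ms β).trace =
      (((1 - (d : ℝ) * a) / ((d : ℝ) * ((d : ℝ) ^ 2 - 1)) : ℝ) : ℂ)) ∧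
  (1 / (d : ℝ) ^ 3 < a ∧ a ≤ 1 / (d : ℝ) ^ 2)

section Frob
variable {k p q : Type*} [Fintype k] [Fintype p] [Fintype q]

lemma trace_conjTranspose_mul (U : Matrix k p ℂ) :
    (Uᴴ * U).trace = ((∑ j, ∑ i, Complex.normSq (U i j) : ℝ) : ℂ) := by
  simp only [Matrix.trace, Matrix.diag, Matrix.mul_apply, Matrix.conjTranspose_apply]
  push_cast
  congr 1; ext j; congr 1; ext i
  rw [Complex.normSq_eq_conj_mul_self]; rfl

lemma frob_nonneg (U : Matrix k p ℂ) : 0 ≤ (Uᴴ * U).trace.re := by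
  rw [trace_conjTranspose_mul]
  rw [Complex.ofReal_re]
  apply Finset.sum_nonneg; intro j _; apply Finset.sum_nonneg; intro i _; exact Complex.normSq_nonneg _

lemma real_CS {ι : Type*} [Fintype ι] (f g : ι → ℝ) (hf : ∀ i, 0 ≤ f i) (hg : ∀ i, 0 ≤ g i) :
    ∑ i, f i * g i ≤ Real.sqrt (∑ i, f i ^ 2) * Real.sqrt (∑ i, g i ^ 2) := by
  have h := Finset.sum_mul_sq_le_sq_mul_sq Finset.univ f g
  have h0 : 0 ≤ ∑ i, f i * g i := Finset.sum_nonneg fun i _ => mul_nonneg (hf i) (hg i)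
  calc ∑ i, f i * g i = Real.sqrt ((∑ i, f i * g i) ^ 2) := (Real.sqrt_sq h0).symm
    _ ≤ Real.sqrt ((∑ i, f i ^ 2) * ∑ i, g i ^ 2) := Real.sqrt_le_sqrt h
    _ = _ := Real.sqrt_mul (by positivity) _

lemma traceNorm_factor_le {k p q : Type*} [Fintype k] [Fintype p] [Fintype q]
    [DecidableEq p] [DecidableEq q] (A : Matrix k p ℂ) (B : Matrix k q ℂ) :
    traceNorm (Aᴴ * B) ≤ Real.sqrt ((Aᴴ * A).trace.re) * Real.sqrt ((Bᴴ * B).trace.re) := by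
  set X := Aᴴ * B with hXdef
  have hX : (Xᴴ * X).PosSemidef := Matrix.posSemidef_conjTranspose_mul_self X
  set hH := hX.1 with hHdef
  set lam : q → ℝ := hH.eigenvalues with hlamdef
  have hlam : ∀ i, 0 ≤ lam i := hX.eigenvalues_nonneg
  set V : Matrix q q ℂ := (hH.eigenvectorUnitary : Matrix q q ℂ) with hVdef
  have hVs : star V * V = 1 := Unitary.coe_star_mul_self _
  have hVs' : V * star V = 1 := Unitary.coe_mul_star_self _
  have hdiag : star V * (Xᴴ * X) * V = Matrix.diagonal (fun i => ((lam i : ℝ) : ℂ)) := by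
    have := hH.conjStarAlgAut_star_eigenvectorUnitary
    rw [Unitary.conjStarAlgAut_apply] at this
    simpa [hVdef, hlamdef, Function.comp_def] using this
  set σ : q → ℝ := fun i => Real.sqrt (lam i) with hσdef
  -- step 1 : traceNorm X = ∑ σ
  have step1 : traceNorm X = ∑ i, σ i := by
    have : traceNorm X =
        (V * Matrix.diagonal (fun i => ((σ i : ℝ) : ℂ)) * star V).trace.re := rfl
    rw [this, Matrix.trace_mul_cycle, hVs, Matrix.one_mul,
      Matrix.trace_diagonal]
    rw [Complex.re_sum]
    simp only [Complex.ofReal_re]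
  set g : q → ℝ := fun i => if lam i = 0 then 0 else (σ i)⁻¹ with hgdef
  set e : q → ℝ := fun i => if lam i = 0 then 0 else 1 with hedef
  have hgl : ∀ i, g i * lam i = σ i := by
    intro i
    by_cases h : lam i = 0
    · simp [hgdef, hσdef, h]
    · have hσ0 : σ i ≠ 0 := by
        simp only [hσdef]
        exact Real.sqrt_ne_zero'.2 (lt_of_le_of_ne (hlam i) (Ne.symm h))
      have : σ i * σ i = lam i := Real.mul_self_sqrt (hlam i)
      show (if lam i = 0 then 0 else (σ i)⁻¹) * lam i = σ i
      rw [if_neg h, ← this, ← mul_assoc, inv_mul_cancel₀ hσ0, one_mul]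
  have hglg : ∀ i, g i * lam i * g i = e i := by
    intro i
    by_cases h : lam i = 0
    · simp [hgdef, hedef, h]
    · have hσ0 : σ i ≠ 0 := by
        simp only [hσdef]
        exact Real.sqrt_ne_zero'.2 (lt_of_le_of_ne (hlam i) (Ne.symm h))
      rw [hgl i]
      simp [hgdef, hedef, h, mul_inv_cancel₀ hσ0]
  have hge : ∀ i, g i * e i = g i := by
    intro i; by_cases h : lam i = 0 <;> simp [hgdef, hedef, h]
  set Y : Matrix p q ℂ := X * V with hYdef
  have hYY : Yᴴ * Y = Matrix.diagonal (fun i => ((lam i : ℝ) : ℂ)) := by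
    rw [hYdef, Matrix.conjTranspose_mul, ← hdiag, Matrix.star_eq_conjTranspose]
    simp only [Matrix.mul_assoc]
  set W : Matrix p q ℂ := Y * Matrix.diagonal (fun i => ((g i : ℝ) : ℂ)) with hWdef
  have hWct : Wᴴ = Matrix.diagonal (fun i => ((g i : ℝ) : ℂ)) * Yᴴ := by
    rw [hWdef, Matrix.conjTranspose_mul, Matrix.diagonal_conjTranspose]
    congr 1
    apply congrArg Matrix.diagonal
    funext i
    simp [Function.comp, Complex.conj_ofReal]
  have hWY : Wᴴ * Y = Matrix.diagonal (fun i => ((σ i : ℝ) : ℂ)) := by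
    rw [hWct, Matrix.mul_assoc, hYY, Matrix.diagonal_mul_diagonal]
    apply congrArg Matrix.diagonal
    funext i
    rw [← Complex.ofReal_mul, hgl i]
  have hWW : Wᴴ * W = Matrix.diagonal (fun i => ((e i : ℝ) : ℂ)) := by
    have h1 : Wᴴ * W = Matrix.diagonal (fun i => ((g i : ℝ) : ℂ)) * (Yᴴ * Y) *
        Matrix.diagonal (fun i => ((g i : ℝ) : ℂ)) := by
      rw [hWct, hWdef]; simp only [Matrix.mul_assoc]
    rw [h1, hYY, Matrix.diagonal_mul_diagonal, Matrix.diagonal_mul_diagonal]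
    apply congrArg Matrix.diagonal
    funext i
    rw [← Complex.ofReal_mul, ← Complex.ofReal_mul, hglg i]
  set P : Matrix p p ℂ := W * Wᴴ with hPdef
  have hWe : W * Matrix.diagonal (fun i => ((e i : ℝ) : ℂ)) = W := by
    rw [hWdef, Matrix.mul_assoc, Matrix.diagonal_mul_diagonal]
    congr 1
    apply congrArg Matrix.diagonal
    funext i
    rw [← Complex.ofReal_mul, hge i]
  have hPP : P * P = P := by
    rw [hPdef]
    calc W * Wᴴ * (W * Wᴴ) = W * (Wᴴ * W) * Wᴴ := by simp only [Matrix.mul_assoc]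
      _ = W * Wᴴ := by rw [hWW, hWe]
  have hPH : Pᴴ = P := by
    rw [hPdef, Matrix.conjTranspose_mul, Matrix.conjTranspose_conjTranspose]
  set S : Matrix p p ℂ := 1 - P with hSdef
  have hSH : Sᴴ = S := by rw [hSdef, Matrix.conjTranspose_sub, Matrix.conjTranspose_one, hPH]
  have hSS : S * S = S := by
    have h : (1 - P) * (1 - P) = 1 - P - P + P * P := by noncomm_ring
    rw [hSdef, h, hPP]
    abel
  have key : ((A * W)ᴴ * (A * W)).trace.re ≤ ((Aᴴ * A).trace).re := by
    have h1 : ((A * W)ᴴ * (A * W)).trace = ((Aᴴ * A) * P).trace := by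
      rw [Matrix.conjTranspose_mul]
      calc (Wᴴ * Aᴴ * (A * W)).trace = (Wᴴ * (Aᴴ * A) * W).trace := by
            simp only [Matrix.mul_assoc]
        _ = (W * Wᴴ * (Aᴴ * A)).trace := Matrix.trace_mul_cycle _ _ _
        _ = ((Aᴴ * A) * P).trace := by rw [hPdef, Matrix.trace_mul_comm]
    have h2 : ((Aᴴ * A) * S).trace = ((A * S)ᴴ * (A * S)).trace := by
      rw [Matrix.conjTranspose_mul, hSH]
      calc ((Aᴴ * A) * S).trace = ((Aᴴ * A) * S * S).trace := by
            rw [Matrix.mul_assoc (Aᴴ * A) S S, hSS]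
        _ = (S * (Aᴴ * A) * S).trace := Matrix.trace_mul_cycle _ _ _
        _ = (S * Aᴴ * (A * S)).trace := by simp only [Matrix.mul_assoc]
    have h3 : 0 ≤ ((A * S)ᴴ * (A * S)).trace.re := frob_nonneg _
    have h4 : (Aᴴ * A).trace = ((Aᴴ * A) * P).trace + ((Aᴴ * A) * S).trace := by
      rw [hSdef, Matrix.mul_sub, Matrix.mul_one, Matrix.trace_sub]
      ring
    rw [h1]
    have := congrArg Complex.re h4
    rw [Complex.add_re] at this
    rw [h2] at this
    linarith
  have hBV : ((B * V)ᴴ * (B * V)).trace = (Bᴴ * B).trace := by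
    rw [Matrix.conjTranspose_mul]
    calc (Vᴴ * Bᴴ * (B * V)).trace = (Vᴴ * (Bᴴ * B) * V).trace := by
          simp only [Matrix.mul_assoc]
      _ = (V * Vᴴ * (Bᴴ * B)).trace := Matrix.trace_mul_cycle _ _ _
      _ = (Bᴴ * B).trace := by
          rw [← Matrix.star_eq_conjTranspose, hVs', Matrix.one_mul]
  -- sum of singular values equals a trace
  have hfac : Wᴴ * Y = (A * W)ᴴ * (B * V) := by
    rw [Matrix.conjTranspose_mul A W]
    calc Wᴴ * Y = Wᴴ * (Aᴴ * B * V) := rfl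
      _ = Wᴴ * Aᴴ * (B * V) := by simp only [Matrix.mul_assoc]
  have h5 : ∑ i, σ i = (((A * W)ᴴ * (B * V)).trace).re := by
    rw [← hfac, hWY, Matrix.trace_diagonal, Complex.re_sum]
    simp only [Complex.ofReal_re]
  -- Cauchy-Schwarz for the Frobenius inner product
  have CS : ∀ (U1 U2 : Matrix k q ℂ), ((U1ᴴ * U2).trace).re ≤
      Real.sqrt (((U1ᴴ * U1).trace).re) * Real.sqrt (((U2ᴴ * U2).trace).re) := by
    intro U1 U2
    have flat : ∀ (U : Matrix k q ℂ), ∑ x : q × k, ‖U x.2 x.1‖ ^ 2 = ((Uᴴ * U).trace).re := by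
      intro U
      rw [trace_conjTranspose_mul, Complex.ofReal_re, Fintype.sum_prod_type]
      congr 1; funext j; congr 1; funext i
      rw [← Complex.sq_norm]
    have hre : ((U1ᴴ * U2).trace).re ≤ ∑ x : q × k, ‖U1 x.2 x.1‖ * ‖U2 x.2 x.1‖ := by
      have ht : (U1ᴴ * U2).trace = ∑ x : q × k, (starRingEnd ℂ) (U1 x.2 x.1) * U2 x.2 x.1 := by
        rw [Fintype.sum_prod_type]
        simp only [Matrix.trace, Matrix.diag, Matrix.mul_apply, Matrix.conjTranspose_apply]
        rfl
      rw [ht, Complex.re_sum]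
      apply Finset.sum_le_sum
      intro x _
      calc ((starRingEnd ℂ) (U1 x.2 x.1) * U2 x.2 x.1).re
          ≤ ‖(starRingEnd ℂ) (U1 x.2 x.1) * U2 x.2 x.1‖ := Complex.re_le_norm _
        _ = ‖U1 x.2 x.1‖ * ‖U2 x.2 x.1‖ := by rw [norm_mul, RCLike.norm_conj]
    calc ((U1ᴴ * U2).trace).re ≤ ∑ x : q × k, ‖U1 x.2 x.1‖ * ‖U2 x.2 x.1‖ := hre
      _ ≤ Real.sqrt (∑ x : q × k, ‖U1 x.2 x.1‖ ^ 2) *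
          Real.sqrt (∑ x : q × k, ‖U2 x.2 x.1‖ ^ 2) :=
        real_CS _ _ (fun x => norm_nonneg _) (fun x => norm_nonneg _)
      _ = Real.sqrt (((U1ᴴ * U1).trace).re) * Real.sqrt (((U2ᴴ * U2).trace).re) := by
        rw [flat U1, flat U2]
  calc traceNorm X = ∑ i, σ i := step1
    _ = (((A * W)ᴴ * (B * V)).trace).re := h5
    _ ≤ Real.sqrt ((((A * W)ᴴ * (A * W)).trace).re) *
        Real.sqrt ((((B * V)ᴴ * (B * V)).trace).re) := CS _ _
    _ ≤ Real.sqrt (((Aᴴ * A).trace).re) * Real.sqrt (((Bᴴ * B).trace).re) := by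
        apply mul_le_mul (Real.sqrt_le_sqrt key) (le_of_eq (by rw [hBV])) (Real.sqrt_nonneg _)
          (Real.sqrt_nonneg _)

lemma trace_mul_real {d : Type*} [Fintype d] {M N : Matrix d d ℂ}
    (hM : M.IsHermitian) (hN : N.IsHermitian) :
    (M * N).trace = (((M * N).trace.re : ℝ) : ℂ) := by
  have h : (starRingEnd ℂ) ((M * N).trace) = (M * N).trace := by
    have h1 : star ((M * N).trace) = ((M * N)ᴴ).trace := (Matrix.trace_conjTranspose _).symm
    have h2 : ((M * N)ᴴ).trace = (N * M).trace := by rw [Matrix.conjTranspose_mul, hM.eq, hN.eq]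
    rw [Complex.star_def] at h1
    rw [h1, h2, Matrix.trace_mul_comm]
  exact (Complex.conj_eq_iff_re.mp h).symm

lemma purity_le_one {d : Type*} [Fintype d] [DecidableEq d] {ρ : Matrix d d ℂ}
    (hρ : IsDensityMatrix ρ) : ((ρ * ρ).trace).re ≤ 1 := by
  obtain ⟨hpsd, htr⟩ := hρ
  set hH := hpsd.1 with hHdef
  set lam := hH.eigenvalues with hlamdef
  have hlam : ∀ i, 0 ≤ lam i := hpsd.eigenvalues_nonneg
  set V : Matrix d d ℂ := (hH.eigenvectorUnitary : Matrix d d ℂ) with hVdef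
  have hVs : star V * V = 1 := Unitary.coe_star_mul_self _
  have hdiag : star V * ρ * V = Matrix.diagonal (fun i => ((lam i : ℝ) : ℂ)) := by
    have := hH.conjStarAlgAut_star_eigenvectorUnitary
    rw [Unitary.conjStarAlgAut_apply] at this
    simpa [hVdef, hlamdef, Function.comp_def] using this
  have hρV : ρ = V * Matrix.diagonal (fun i => ((lam i : ℝ) : ℂ)) * star V := by
    have := hH.spectral_theorem
    rw [Unitary.conjStarAlgAut_apply] at this
    simpa [hVdef, hlamdef, Function.comp_def] using this
  have htrd : ρ.trace = ∑ i, ((lam i : ℝ) : ℂ) := by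
    rw [hρV, Matrix.trace_mul_cycle, hVs, Matrix.one_mul, Matrix.trace_diagonal]
  have htr1 : ∑ i, lam i = 1 := by
    have : ((∑ i, lam i : ℝ) : ℂ) = 1 := by push_cast [← htrd]; exact htr
    exact_mod_cast this
  have hsq : (ρ * ρ).trace = ∑ i, ((lam i ^ 2 : ℝ) : ℂ) := by
    have h2 : ρ * ρ = V * Matrix.diagonal (fun i => ((lam i ^ 2 : ℝ) : ℂ)) * star V := by
      rw [hρV]
      calc V * Matrix.diagonal (fun i => ((lam i : ℝ) : ℂ)) * star V *
            (V * Matrix.diagonal (fun i => ((lam i : ℝ) : ℂ)) * star V)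
          = V * Matrix.diagonal (fun i => ((lam i : ℝ) : ℂ)) * (star V * V) *
            Matrix.diagonal (fun i => ((lam i : ℝ) : ℂ)) * star V := by
            simp only [Matrix.mul_assoc]
        _ = V * (Matrix.diagonal (fun i => ((lam i : ℝ) : ℂ)) *
            Matrix.diagonal (fun i => ((lam i : ℝ) : ℂ))) * star V := by
            rw [hVs, Matrix.mul_one]
            simp only [Matrix.mul_assoc]
        _ = V * Matrix.diagonal (fun i => ((lam i ^ 2 : ℝ) : ℂ)) * star V := by
            rw [Matrix.diagonal_mul_diagonal]
            congr 2
            funext i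
            push_cast
            ring
    rw [h2, Matrix.trace_mul_cycle, hVs, Matrix.one_mul, Matrix.trace_diagonal]
  have : ((ρ * ρ).trace).re = ∑ i, lam i ^ 2 := by
    rw [hsq, Complex.re_sum]
    simp only [Complex.ofReal_re]
  rw [this, ← htr1]
  have hle1 : ∀ i, lam i ≤ 1 := by
    intro i
    rw [← htr1]
    exact Finset.single_le_sum (fun j _ => hlam j) (Finset.mem_univ i)
  calc ∑ i, lam i ^ 2 ≤ ∑ i, lam i * 1 := by
        apply Finset.sum_le_sum
        intro i _
        rw [pow_two]
        exact mul_le_mul_of_nonneg_left (hle1 i) (hlam i)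
    _ = ∑ i, lam i := by simp

lemma gsic_bound {d : ℕ} {x : ℝ} {M : Fin (d ^ 2) → Matrix (Fin d) (Fin d) ℂ}
    (hM : IsGSICPOVM d x M) {ρ : Matrix (Fin d) (Fin d) ℂ} (hρ : IsDensityMatrix ρ) :
    ∑ α, (((M α * ρ).trace).re) ^ 2 ≤ (x * (d : ℝ) ^ 2 + 1) / ((d : ℝ) * ((d : ℝ) + 1)) := by
  obtain ⟨hpos, hsum, htr2, hcross, hlow, hupp⟩ := hM
  -- d ≥ 2
  have hd : 2 ≤ d := by
    by_contra h
    push_neg at h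
    interval_cases d
    · norm_num at hlow hupp; linarith
    · norm_num at hlow hupp; linarith
  have hdR : (2 : ℝ) ≤ (d : ℝ) := by exact_mod_cast hd
  have hdR0 : (0 : ℝ) < (d : ℝ) := by linarith
  set c0 : ℝ := (1 - (d : ℝ) * x) / ((d : ℝ) * ((d : ℝ) ^ 2 - 1)) with hc0def
  have hden : (0 : ℝ) < (d : ℝ) * ((d : ℝ) ^ 2 - 1) := by nlinarith
  have hxupp : x ≤ 1 / (d : ℝ) ^ 2 := hupp
  have hxlow : 1 / (d : ℝ) ^ 3 < x := hlow
  have hc0 : 0 ≤ c0 := by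
    apply div_nonneg _ (le_of_lt hden)
    rw [sub_nonneg]
    calc (d : ℝ) * x ≤ (d : ℝ) * (1 / (d : ℝ) ^ 2) := by
          exact mul_le_mul_of_nonneg_left hxupp (le_of_lt hdR0)
      _ = 1 / (d : ℝ) := by field_simp
      _ ≤ 1 := by rw [div_le_one hdR0]; linarith
  have hxc : 0 < x - c0 := by
    have h1 : x * ((d : ℝ) * ((d : ℝ) ^ 2 - 1)) - (1 - (d : ℝ) * x) = x * (d : ℝ) ^ 3 - 1 := by
      ring
    have h2 : 1 < x * (d : ℝ) ^ 3 := by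
      rw [div_lt_iff₀ (by positivity)] at hxlow
      linarith
    have : 0 < (x - c0) * ((d : ℝ) * ((d : ℝ) ^ 2 - 1)) := by
      rw [hc0def, sub_mul, div_mul_cancel₀ _ (ne_of_gt hden)]
      linarith
    nlinarith [this, hden]
  have hkey : x + c0 * ((d : ℝ) ^ 2 - 1) = 1 / (d : ℝ) := by
    have hne : (d : ℝ) ^ 2 - 1 ≠ 0 := by nlinarith
    have hd0 : (d : ℝ) ≠ 0 := by positivity
    rw [hc0def]
    field_simp
    ring
  have hkey' : (x + c0 * ((d : ℝ) ^ 2 - 1)) * (d : ℝ) = 1 := by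
    rw [hkey]
    field_simp
  classical
  have card_univ : (Finset.univ : Finset (Fin (d ^ 2))).card = d ^ 2 := by simp
  have hd2one : (1 : ℕ) ≤ d ^ 2 := Nat.one_le_pow _ _ (by omega)
  have htrM : ∀ α, (M α).trace = ((1 / (d : ℝ) : ℝ) : ℂ) := by
    intro α
    have h1 : (M α).trace = ∑ β, (M α * M β).trace := by
      rw [← Matrix.trace_sum]
      congr 1
      rw [← Finset.mul_sum, hsum, Matrix.mul_one]
    rw [h1, ← Finset.add_sum_erase _ _ (Finset.mem_univ α), htr2 α]
    have h2 : ∑ β ∈ Finset.univ.erase α, (M α * M β).trace = ((((d : ℝ) ^ 2 - 1) * c0 : ℝ) : ℂ) := by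
      rw [Finset.sum_congr rfl
        (fun β hβ => hcross α β (Ne.symm (Finset.ne_of_mem_erase hβ)))]
      rw [Finset.sum_const, Finset.card_erase_of_mem (Finset.mem_univ α), card_univ,
        nsmul_eq_mul]
      push_cast [Nat.cast_sub hd2one]
      ring
    rw [h2, ← Complex.ofReal_add]
    exact congrArg Complex.ofReal (by linear_combination hkey)
  have hxcC : ((x : ℂ) - (c0 : ℂ)) ≠ 0 := by
    intro hcontra
    have : ((x - c0 : ℝ) : ℂ) = 0 := by push_cast; linear_combination hcontra
    have : x - c0 = 0 := by exact_mod_cast this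
    linarith
  have hkC : (((x : ℂ) + (c0 : ℂ) * ((d : ℂ) ^ 2 - 1)) * (d : ℂ)) = 1 := by
    have := hkey'
    have h := congrArg (fun y : ℝ => (y : ℂ)) hkey'
    push_cast at h
    linear_combination h
  have hdC0 : ((d : ℂ)) ≠ 0 := by
    exact_mod_cast (ne_of_gt hdR0)
  have hcoef2 : ((x : ℂ) - c0) + (d : ℂ) ^ 2 * c0 ≠ 0 := by
    intro hcontra
    have : ((1 : ℂ)) = 0 := by
      rw [← hkC]
      linear_combination (d : ℂ) * hcontra
    exact one_ne_zero this
  -- expansion of traces against a matrix written as a combination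
  have expand : ∀ (c : Fin (d ^ 2) → ℂ) (β : Fin (d ^ 2)),
      (M β * ∑ i, c i • M i).trace = ((x : ℂ) - c0) * c β + (c0 : ℂ) * ∑ α, c α := by
    intro c β
    have h1 : (M β * ∑ i, c i • M i).trace = ∑ i, c i * (M β * M i).trace := by
      rw [Finset.mul_sum, Matrix.trace_sum]
      congr 1
      funext i
      rw [Matrix.mul_smul, Matrix.trace_smul]
      simp [smul_eq_mul]
    rw [h1, ← Finset.add_sum_erase _ _ (Finset.mem_univ β), htr2 β]
    have h2 : ∑ i ∈ Finset.univ.erase β, c i * (M β * M i).trace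
        = (∑ i, c i) * (c0 : ℂ) - c β * c0 := by
      rw [Finset.sum_congr rfl (fun i hi => by
        rw [hcross β i (Ne.symm (Finset.ne_of_mem_erase hi))])]
      rw [← Finset.sum_mul, Finset.sum_erase_eq_sub (Finset.mem_univ β), sub_mul]
    rw [h2]
    ring
  have hli : LinearIndependent ℂ M := by
    rw [Fintype.linearIndependent_iff]
    intro c hc
    have hG : ∀ β, ((x : ℂ) - c0) * c β + (c0 : ℂ) * ∑ α, c α = 0 := by
      intro β
      rw [← expand c β, hc, Matrix.mul_zero, Matrix.trace_zero]
    have hs0 : (∑ α, c α) = 0 := by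
      have h4 : ∑ β : Fin (d ^ 2), (((x : ℂ) - c0) * c β + (c0 : ℂ) * ∑ α, c α)
          = (((x : ℂ) - c0) + (d : ℂ) ^ 2 * c0) * ∑ α, c α := by
        rw [Finset.sum_add_distrib, ← Finset.mul_sum, Finset.sum_const, card_univ,
          nsmul_eq_mul]
        push_cast
        ring
      have h5 : (((x : ℂ) - c0) + (d : ℂ) ^ 2 * c0) * (∑ α, c α) = 0 := by
        rw [← h4]
        exact Finset.sum_eq_zero (fun β _ => hG β)
      exact (mul_eq_zero.mp h5).resolve_left hcoef2
    intro β
    have := hG β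
    rw [hs0, mul_zero, add_zero] at this
    exact (mul_eq_zero.mp this).resolve_left hxcC
  haveI : Nonempty (Fin (d ^ 2)) := ⟨⟨0, by positivity⟩⟩
  have hcard : Fintype.card (Fin (d ^ 2)) = Module.finrank ℂ (Matrix (Fin d) (Fin d) ℂ) := by
    rw [Module.finrank_matrix]
    simp [pow_two]
  have hb : ⇑(basisOfLinearIndependentOfCardEqFinrank hli hcard) = M :=
    coe_basisOfLinearIndependentOfCardEqFinrank _ _
  set b := basisOfLinearIndependentOfCardEqFinrank hli hcard with hbdef
  set r : Fin (d ^ 2) → ℂ := fun α => b.repr ρ α with hrdef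
  have hρr : ρ = ∑ α, r α • M α := by
    have h := b.sum_repr ρ
    rw [hb] at h
    exact h.symm
  set s : ℂ := ∑ α, r α with hsdef
  have ht : ∀ β, (M β * ρ).trace = ((x : ℂ) - c0) * r β + (c0 : ℂ) * s := by
    intro β
    conv_lhs => rw [hρr]
    exact expand r β
  have hs : s = (d : ℂ) := by
    have h1 : ρ.trace = s * ((1 / (d : ℝ) : ℝ) : ℂ) := by
      conv_lhs => rw [hρr]
      rw [Matrix.trace_sum, hsdef, Finset.sum_mul]
      apply Finset.sum_congr rfl
      intro α _
      rw [Matrix.trace_smul, htrM α]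
      simp [smul_eq_mul]
    have h2 : s * ((1 / (d : ℝ) : ℝ) : ℂ) = 1 := by rw [← h1, hρ.2]
    have h3 : ((1 / (d : ℝ) : ℝ) : ℂ) = 1 / (d : ℂ) := by push_cast; ring
    rw [h3] at h2
    calc s = s * (1 / (d : ℂ) * (d : ℂ)) := by field_simp
      _ = (d : ℂ) := by rw [← mul_assoc, h2, one_mul]
  have eq1 : (ρ * ρ).trace = ((x : ℂ) - c0) * (∑ α, r α ^ 2) + (c0 : ℂ) * ((d : ℂ) * (d : ℂ)) := by
    have h1 : (ρ * ρ).trace = ∑ α, r α * (M α * ρ).trace := by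
      conv_lhs => rw [show ρ * ρ = (∑ α, r α • M α) * ρ from by rw [← hρr]]
      rw [Matrix.sum_mul, Matrix.trace_sum]
      apply Finset.sum_congr rfl
      intro α _
      rw [Matrix.smul_mul, Matrix.trace_smul]
      simp [smul_eq_mul]
    rw [h1]
    calc ∑ α, r α * (M α * ρ).trace
        = ∑ α, (((x : ℂ) - c0) * r α ^ 2 + (c0 : ℂ) * (d : ℂ) * r α) := by
          apply Finset.sum_congr rfl
          intro α _
          rw [ht α, hs]
          ring
      _ = ((x : ℂ) - c0) * (∑ α, r α ^ 2) + (c0 : ℂ) * (d : ℂ) * s := by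
          rw [Finset.sum_add_distrib, ← Finset.mul_sum, ← Finset.mul_sum, hsdef]
      _ = _ := by rw [hs]; ring
  have eq2 : ∑ β, ((M β * ρ).trace) ^ 2
      = ((x : ℂ) - c0) ^ 2 * (∑ α, r α ^ 2) + 2 * ((x : ℂ) - c0) * (c0 : ℂ) * (d : ℂ) * (d : ℂ)
        + (c0 : ℂ) ^ 2 * (d : ℂ) ^ 2 * (d : ℂ) ^ 2 := by
    calc ∑ β, ((M β * ρ).trace) ^ 2
        = ∑ β, (((x : ℂ) - c0) ^ 2 * r β ^ 2
            + 2 * ((x : ℂ) - c0) * ((c0 : ℂ) * (d : ℂ)) * r β + ((c0 : ℂ) * (d : ℂ)) ^ 2) := by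
          apply Finset.sum_congr rfl
          intro β _
          rw [ht β, hs]
          ring
      _ = ((x : ℂ) - c0) ^ 2 * (∑ α, r α ^ 2)
            + 2 * ((x : ℂ) - c0) * ((c0 : ℂ) * (d : ℂ)) * s
            + ((d ^ 2 : ℕ) : ℂ) * ((c0 : ℂ) * (d : ℂ)) ^ 2 := by
          rw [Finset.sum_add_distrib, Finset.sum_add_distrib, ← Finset.mul_sum, ← Finset.mul_sum,
            Finset.sum_const, card_univ, nsmul_eq_mul, hsdef]
      _ = _ := by rw [hs]; push_cast; ring
  have main : ∑ β, ((M β * ρ).trace) ^ 2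
      = ((x : ℂ) - c0) * (ρ * ρ).trace + (c0 : ℂ) * (d : ℂ) := by
    linear_combination eq2 - ((x : ℂ) - c0) * eq1 + (c0 : ℂ) * (d : ℂ) * hkC
  -- pass to real parts
  have htreal : ∀ β, (M β * ρ).trace = (((M β * ρ).trace.re : ℝ) : ℂ) := fun β =>
    trace_mul_real (hpos β).1 hρ.1.1
  have hpur : (ρ * ρ).trace = (((ρ * ρ).trace.re : ℝ) : ℂ) := trace_mul_real hρ.1.1 hρ.1.1
  have mainR : ∑ β, ((M β * ρ).trace.re) ^ 2 = (x - c0) * ((ρ * ρ).trace.re) + c0 * (d : ℝ) := by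
    have hcast : ((∑ β, ((M β * ρ).trace.re) ^ 2 : ℝ) : ℂ)
        = ((((x - c0) * ((ρ * ρ).trace.re) + c0 * (d : ℝ) : ℝ)) : ℂ) := by
      push_cast
      calc ∑ β, (((M β * ρ).trace.re : ℂ)) ^ 2 = ∑ β, ((M β * ρ).trace) ^ 2 := by
            apply Finset.sum_congr rfl
            intro β _
            rw [← htreal β]
        _ = ((x : ℂ) - c0) * (ρ * ρ).trace + (c0 : ℂ) * (d : ℂ) := main
        _ = _ := by conv_lhs => rw [hpur]
    exact_mod_cast hcast
  have hpur1 : ((ρ * ρ).trace).re ≤ 1 := purity_le_one hρ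
  have hfinal : (x - c0) * ((ρ * ρ).trace.re) + c0 * (d : ℝ) ≤ (x - c0) + c0 * (d : ℝ) := by
    have := mul_le_mul_of_nonneg_left hpur1 (le_of_lt hxc)
    linarith
  have heq : (x - c0) + c0 * (d : ℝ) = (x * (d : ℝ) ^ 2 + 1) / ((d : ℝ) * ((d : ℝ) + 1)) := by
    rw [hc0def]
    have h1 : (d : ℝ) * ((d : ℝ) ^ 2 - 1) ≠ 0 := ne_of_gt hden
    have h2 : (d : ℝ) * ((d : ℝ) + 1) ≠ 0 := by positivity
    have hne2 : (d : ℝ) - 1 ≠ 0 := by linarith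
    have hd0 : (d : ℝ) ≠ 0 := by positivity
    rw [show (d : ℝ) ^ 2 - 1 = ((d : ℝ) - 1) * ((d : ℝ) + 1) by ring]
    field_simp
    ring
  rw [mainR]
  rw [heq] at hfinal
  exact hfinal


/-- Corollary 1 of the paper: for a separable bipartite state
ρ_AB, arbitrary real vectors a, b, and GSIC-POVMs with parameters a_A, a_B on
the two subsystems,
‖Q_{a,b}(ρ_AB)‖_tr ≤ √((|a|² + (a_A d_A²+1)/(d_A(d_A+1)))·(|b|² + (a_B d_B²+1)/(d_B(d_B+1)))). -/
theorem separability_criterion_GSIC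
    (dA dB m n : ℕ) (aA aB : ℝ)
    (MA : Fin (dA ^ 2) → Matrix (Fin dA) (Fin dA) ℂ)
    (MB : Fin (dB ^ 2) → Matrix (Fin dB) (Fin dB) ℂ)
    (hMA : IsGSICPOVM dA aA MA) (hMB : IsGSICPOVM dB aB MB)
    (a : Fin m → ℝ) (b : Fin n → ℝ)
    (ρ : Matrix (Fin dA × Fin dB) (Fin dA × Fin dB) ℂ)
    (hρ : IsDensityMatrix ρ) (hsep : SeparableState ρ) :
    traceNorm (Matrix.fromBlocks
      (Matrix.of fun (i : Fin m) (j : Fin n) => ((a i : ℂ) * (b j : ℂ)))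
      (Matrix.of fun (i : Fin m) (β : Fin (dB ^ 2)) =>
        (a i : ℂ) * (MB β * ptraceA ρ).trace)
      (Matrix.of fun (α : Fin (dA ^ 2)) (j : Fin n) =>
        (MA α * ptraceB ρ).trace * (b j : ℂ))
      (Matrix.of fun (α : Fin (dA ^ 2)) (β : Fin (dB ^ 2)) =>
        ((MA α ⊗ₖ MB β) * ρ).trace)) ≤
    Real.sqrt (
      (∑ i, a i ^ 2 + (aA * (dA : ℝ) ^ 2 + 1) / ((dA : ℝ) * ((dA : ℝ) + 1))) *
      (∑ j, b j ^ 2 + (aB * (dB : ℝ) ^ 2 + 1) / ((dB : ℝ) * ((dB : ℝ) + 1)))) := by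
  classical
  obtain ⟨K, pp, ρA, ρB, hp, hpsum, hdA, hdB, hρeq⟩ := hsep
  set SA : ℝ := ∑ i, a i ^ 2 + (aA * (dA : ℝ) ^ 2 + 1) / ((dA : ℝ) * ((dA : ℝ) + 1)) with hSAdef
  set SB : ℝ := ∑ j, b j ^ 2 + (aB * (dB : ℝ) ^ 2 + 1) / ((dB : ℝ) * ((dB : ℝ) + 1)) with hSBdef
  set u : Fin K → (Fin m ⊕ Fin (dA ^ 2)) → ℝ :=
    fun k => Sum.elim a (fun α => ((MA α * ρA k).trace).re) with hudef
  set v : Fin K → (Fin n ⊕ Fin (dB ^ 2)) → ℝ :=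
    fun k => Sum.elim b (fun β => ((MB β * ρB k).trace).re) with hvdef
  set A : Matrix (Fin K) (Fin m ⊕ Fin (dA ^ 2)) ℂ :=
    Matrix.of fun k x => ((Real.sqrt (pp k) * u k x : ℝ) : ℂ) with hAdef
  set B : Matrix (Fin K) (Fin n ⊕ Fin (dB ^ 2)) ℂ :=
    Matrix.of fun k y => ((Real.sqrt (pp k) * v k y : ℝ) : ℂ) with hBdef
  have hrealA : ∀ k α, (MA α * ρA k).trace = (((MA α * ρA k).trace.re : ℝ) : ℂ) :=
    fun k α => trace_mul_real (hMA.1 α).1 (hdA k).1.1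
  have hrealB : ∀ k β, (MB β * ρB k).trace = (((MB β * ρB k).trace.re : ℝ) : ℂ) :=
    fun k β => trace_mul_real (hMB.1 β).1 (hdB k).1.1
  have hAB : ∀ x y, (Aᴴ * B) x y = ∑ k, ((pp k * u k x * v k y : ℝ) : ℂ) := by
    intro x y
    rw [Matrix.mul_apply]
    apply Finset.sum_congr rfl
    intro k _
    rw [Matrix.conjTranspose_apply, hAdef, hBdef]
    show star ((Real.sqrt (pp k) * u k x : ℝ) : ℂ) * ((Real.sqrt (pp k) * v k y : ℝ) : ℂ) = _
    rw [Complex.star_def, Complex.conj_ofReal, ← Complex.ofReal_mul]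
    congr 1
    have h := Real.mul_self_sqrt (hp k)
    linear_combination u k x * v k y * h
  have hptA : ptraceA ρ = ∑ k, (pp k : ℂ) • ρB k := by
    ext i j
    show ∑ c, ρ (c, i) (c, j) = _
    rw [hρeq]
    simp only [Matrix.sum_apply, Matrix.smul_apply, Matrix.kroneckerMap_apply, smul_eq_mul]
    rw [Finset.sum_comm]
    apply Finset.sum_congr rfl
    intro k _
    have : ∑ c, (pp k : ℂ) * (ρA k c c * ρB k i j)
        = (pp k : ℂ) * ((ρA k).trace * ρB k i j) := by
      rw [Matrix.trace, Finset.sum_mul, Finset.mul_sum]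
      rfl
    rw [this, (hdA k).2, one_mul]
  have hptB : ptraceB ρ = ∑ k, (pp k : ℂ) • ρA k := by
    ext i j
    show ∑ c, ρ (i, c) (j, c) = _
    rw [hρeq]
    simp only [Matrix.sum_apply, Matrix.smul_apply, Matrix.kroneckerMap_apply, smul_eq_mul]
    rw [Finset.sum_comm]
    apply Finset.sum_congr rfl
    intro k _
    have : ∑ c, (pp k : ℂ) * (ρA k i j * ρB k c c)
        = (pp k : ℂ) * (ρA k i j * (ρB k).trace) := by
      rw [Matrix.trace, Finset.mul_sum, Finset.mul_sum]
      apply Finset.sum_congr rfl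
      intro c _
      simp only [Matrix.diag_apply]
    rw [this, (hdB k).2, mul_one]
  have htrB : ∀ β, (MB β * ptraceA ρ).trace = ∑ k, (pp k : ℂ) * (MB β * ρB k).trace := by
    intro β
    rw [hptA, Finset.mul_sum, Matrix.trace_sum]
    apply Finset.sum_congr rfl
    intro k _
    rw [Matrix.mul_smul, Matrix.trace_smul]
    simp [smul_eq_mul]
  have htrA : ∀ α, (MA α * ptraceB ρ).trace = ∑ k, (pp k : ℂ) * (MA α * ρA k).trace := by
    intro α
    rw [hptB, Finset.mul_sum, Matrix.trace_sum]
    apply Finset.sum_congr rfl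
    intro k _
    rw [Matrix.mul_smul, Matrix.trace_smul]
    simp [smul_eq_mul]
  have hGk : ∀ α β, ((MA α ⊗ₖ MB β) * ρ).trace
      = ∑ k, (pp k : ℂ) * ((MA α * ρA k).trace * (MB β * ρB k).trace) := by
    intro α β
    rw [hρeq, Finset.mul_sum, Matrix.trace_sum]
    apply Finset.sum_congr rfl
    intro k _
    rw [Matrix.mul_smul, Matrix.trace_smul, ← Matrix.mul_kronecker_mul, Matrix.trace_kronecker]
    simp [smul_eq_mul]
  have hQ : (Matrix.fromBlocks
      (Matrix.of fun (i : Fin m) (j : Fin n) => ((a i : ℂ) * (b j : ℂ)))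
      (Matrix.of fun (i : Fin m) (β : Fin (dB ^ 2)) =>
        (a i : ℂ) * (MB β * ptraceA ρ).trace)
      (Matrix.of fun (α : Fin (dA ^ 2)) (j : Fin n) =>
        (MA α * ptraceB ρ).trace * (b j : ℂ))
      (Matrix.of fun (α : Fin (dA ^ 2)) (β : Fin (dB ^ 2)) =>
        ((MA α ⊗ₖ MB β) * ρ).trace)) = Aᴴ * B := by
    ext x y
    rw [hAB x y]
    cases x with
    | inl i =>
      cases y with
      | inl j =>
        show (a i : ℂ) * (b j : ℂ) = _
        calc (a i : ℂ) * (b j : ℂ) = ((a i * b j : ℝ) : ℂ) := by push_cast; ring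
          _ = ((∑ k, pp k * (a i * b j) : ℝ) : ℂ) := by
              rw [← Finset.sum_mul, hpsum, one_mul]
          _ = ∑ k, ((pp k * u k (Sum.inl i) * v k (Sum.inl j) : ℝ) : ℂ) := by
              push_cast
              apply Finset.sum_congr rfl
              intro k _
              simp only [hudef, hvdef, Sum.elim_inl]
              ring
      | inr β =>
        show (a i : ℂ) * (MB β * ptraceA ρ).trace = _
        rw [htrB β, Finset.mul_sum]
        apply Finset.sum_congr rfl
        intro k _
        rw [hrealB k β]
        simp only [hudef, hvdef, Sum.elim_inl, Sum.elim_inr]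
        push_cast
        ring
    | inr α =>
      cases y with
      | inl j =>
        show (MA α * ptraceB ρ).trace * (b j : ℂ) = _
        rw [htrA α, Finset.sum_mul]
        apply Finset.sum_congr rfl
        intro k _
        rw [hrealA k α]
        simp only [hudef, hvdef, Sum.elim_inl, Sum.elim_inr]
        push_cast
        ring
      | inr β =>
        show ((MA α ⊗ₖ MB β) * ρ).trace = _
        rw [hGk α β]
        apply Finset.sum_congr rfl
        intro k _
        rw [hrealA k α, hrealB k β]
        simp only [hudef, hvdef, Sum.elim_inr]
        push_cast
        ring
  -- Frobenius norms bounds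
  have frobA : ((Aᴴ * A).trace).re ≤ SA := by
    rw [trace_conjTranspose_mul, Complex.ofReal_re]
    have hentry : ∀ (x : Fin m ⊕ Fin (dA ^ 2)) (k : Fin K),
        Complex.normSq (A k x) = pp k * u k x ^ 2 := by
      intro x k
      rw [hAdef]
      show Complex.normSq ((Real.sqrt (pp k) * u k x : ℝ) : ℂ) = _
      rw [Complex.normSq_ofReal]
      have h := Real.mul_self_sqrt (hp k)
      linear_combination u k x ^ 2 * h
    calc ∑ x, ∑ k, Complex.normSq (A k x) = ∑ k, ∑ x, pp k * u k x ^ 2 := by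
          rw [Finset.sum_comm]
          apply Finset.sum_congr rfl
          intro k _
          apply Finset.sum_congr rfl
          intro x _
          exact hentry x k
      _ = ∑ k, pp k * (∑ x, u k x ^ 2) := by
          apply Finset.sum_congr rfl
          intro k _
          rw [Finset.mul_sum]
      _ ≤ ∑ k, pp k * SA := by
          apply Finset.sum_le_sum
          intro k _
          apply mul_le_mul_of_nonneg_left _ (hp k)
          rw [Fintype.sum_sum_type]
          simp only [hudef, Sum.elim_inl, Sum.elim_inr]
          rw [hSAdef]
          exact add_le_add_right (gsic_bound hMA (hdA k)) _
      _ = SA := by rw [← Finset.sum_mul, hpsum, one_mul]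
  have frobB : ((Bᴴ * B).trace).re ≤ SB := by
    rw [trace_conjTranspose_mul, Complex.ofReal_re]
    have hentry : ∀ (y : Fin n ⊕ Fin (dB ^ 2)) (k : Fin K),
        Complex.normSq (B k y) = pp k * v k y ^ 2 := by
      intro y k
      rw [hBdef]
      show Complex.normSq ((Real.sqrt (pp k) * v k y : ℝ) : ℂ) = _
      rw [Complex.normSq_ofReal]
      have h := Real.mul_self_sqrt (hp k)
      linear_combination v k y ^ 2 * h
    calc ∑ y, ∑ k, Complex.normSq (B k y) = ∑ k, ∑ y, pp k * v k y ^ 2 := by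
          rw [Finset.sum_comm]
          apply Finset.sum_congr rfl
          intro k _
          apply Finset.sum_congr rfl
          intro y _
          exact hentry y k
      _ = ∑ k, pp k * (∑ y, v k y ^ 2) := by
          apply Finset.sum_congr rfl
          intro k _
          rw [Finset.mul_sum]
      _ ≤ ∑ k, pp k * SB := by
          apply Finset.sum_le_sum
          intro k _
          apply mul_le_mul_of_nonneg_left _ (hp k)
          rw [Fintype.sum_sum_type]
          simp only [hvdef, Sum.elim_inl, Sum.elim_inr]
          rw [hSBdef]
          exact add_le_add_right (gsic_bound hMB (hdB k)) _
      _ = SB := by rw [← Finset.sum_mul, hpsum, one_mul]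
  have hfrobA0 : 0 ≤ ((Aᴴ * A).trace).re := frob_nonneg A
  have hfrobB0 : 0 ≤ ((Bᴴ * B).trace).re := frob_nonneg B
  have hSA0 : 0 ≤ SA := le_trans hfrobA0 frobA
  have hSB0 : 0 ≤ SB := le_trans hfrobB0 frobB
  rw [hQ]
  calc traceNorm (Aᴴ * B)
      ≤ Real.sqrt (((Aᴴ * A).trace).re) * Real.sqrt (((Bᴴ * B).trace).re) :=
        traceNorm_factor_le A B
    _ ≤ Real.sqrt SA * Real.sqrt SB :=
        mul_le_mul (Real.sqrt_le_sqrt frobA) (Real.sqrt_le_sqrt frobB)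
          (Real.sqrt_nonneg _) (Real.sqrt_nonneg _)
    _ = Real.sqrt (SA * SB) := (Real.sqrt_mul hSA0 _).symm
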